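/- Jensen's surrogate majorization: let f : ℝ → ℝ be convex, let h ∈ ℝ^N with hⱼ ≥ 0, and let r ∈ ℝ^N with rⱼ > 0 and ∑ⱼ rⱼ ≤ 1 and rⱼ > 0 whenever hⱼ > 0. Then for all x, x̂ ∈ ℝ^N, f(⟨h, x⟩) ≤ ∑ⱼ rⱼ · f((hⱼ/rⱼ)(xⱼ − x̂ⱼ) + ⟨h, x̂⟩) + (1 − ∑ⱼ rⱼ)·f(⟨h, x̂⟩), with equality when x = x̂. -/

import Mathlib

theorem stmt_6 (N : ℕ) (f : ℝ → ℝ) (hf : ConvexOn ℝ Set.univ f)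
    (h r : Fin N → ℝ) (hh : ∀ j, 0 ≤ h j) (hr : ∀ j, 0 < r j)
    (hrsum : ∑ j, r j ≤ 1) (x xhat : Fin N → ℝ) :
    f (∑ j, h j * x j) ≤
        (∑ j, r j * f ((h j / r j) * (x j - xhat j) + ∑ j', h j' * xhat j')) +
          (1 - ∑ j, r j) * f (∑ j, h j * xhat j) ∧
      (x = xhat →
        f (∑ j, h j * x j) =
          (∑ j, r j * f ((h j / r j) * (x j - xhat j) + ∑ j', h j' * xhat j')) +
            (1 - ∑ j, r j) * f (∑ j, h j * xhat j)) := by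
  set S := ∑ j', h j' * xhat j' with hS
  have key : (1 - ∑ j, r j) * S + ∑ j, r j • ((h j / r j) * (x j - xhat j) + S)
      = ∑ j, h j * x j := by
    have : ∀ j, r j • ((h j / r j) * (x j - xhat j) + S)
        = h j * x j - h j * xhat j + r j * S := by
      intro j
      have hrj : r j ≠ 0 := (hr j).ne'
      field_simp
      linear_combination (h j * x j - h j * xhat j + r j * S) * mul_inv_cancel₀ hrj
    simp only [this, Finset.sum_add_distrib, Finset.sum_sub_distrib, ← Finset.sum_mul]
    rw [hS]
    ring
  have main : f (∑ j, h j * x j) ≤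
      (∑ j, r j * f ((h j / r j) * (x j - xhat j) + S)) + (1 - ∑ j, r j) * f S := by
    have := hf.map_add_sum_le (v := 1 - ∑ j, r j) (q := S)
      (w := r) (p := fun j => (h j / r j) * (x j - xhat j) + S)
      (t := Finset.univ)
      (fun i _ => (hr i).le) (by ring) (fun i _ => trivial)
      (by linarith) trivial
    simp only [smul_eq_mul] at this
    simp only [smul_eq_mul] at key
    rw [key] at this
    linarith
  refine ⟨main, fun hx => ?_⟩
  subst hx
  have harg : ∀ j, (h j / r j) * (x j - x j) + S = S := by intro j; simp
  simp only [harg, ← hS]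
  rw [← Finset.sum_mul]
  ring
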